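/- For any upper triangular matrix A ∈ M_n(ℂ) with constant diagonal α, and for any ε > 0, there exists an upper triangular matrix B ∈ M_n(ℂ) with constant diagonal α, the same entries as A on every diagonal except the superdiagonal, all superdiagonal entries nonzero, and ‖A − B‖ < ε (in operator norm). In particular, strongly irreducible upper triangular matrices with constant diagonal are dense among upper triangular matrices with constant diagonal. -/

import Mathlib

open scoped Matrix.Norms.L2Operator

/-- A matrix supported on the superdiagonal with entries of norm at most `δ` has
L2 operator norm at most `δ`. -/
lemma superdiag_opNorm_le {n : ℕ} (D : Matrix (Fin n) (Fin n) ℂ) (δ : ℝ) (hδ : 0 ≤ δ)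
    (hsupp : ∀ i j : Fin n, (i : ℕ) + 1 ≠ (j : ℕ) → D i j = 0)
    (hbdd : ∀ i j : Fin n, ‖D i j‖ ≤ δ) : ‖D‖ ≤ δ := by
  rw [Matrix.l2_opNorm_def]
  apply ContinuousLinearMap.opNorm_le_bound _ hδ
  intro x
  rw [LinearEquiv.trans_apply, LinearMap.coe_toContinuousLinearMap']
  rw [EuclideanSpace.norm_eq]
  rw [show ‖x‖ = Real.sqrt (∑ j, ‖x j‖ ^ 2) from EuclideanSpace.norm_eq x]
  rw [← Real.sqrt_sq hδ, ← Real.sqrt_mul (by positivity)]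
  apply Real.sqrt_le_sqrt
  have hrow : ∀ i : Fin n, ‖(Matrix.toEuclideanLin D x : EuclideanSpace ℂ (Fin n)) i‖ ^ 2
      ≤ δ ^ 2 * ∑ j : Fin n, (if (i : ℕ) + 1 = (j : ℕ) then ‖x j‖ ^ 2 else 0) := by
    intro i
    have happ : (Matrix.toEuclideanLin D x : EuclideanSpace ℂ (Fin n)) i
        = ∑ j, D i j * x j := rfl
    rw [happ]
    by_cases h : (i : ℕ) + 1 < n
    · have h1 : ∑ j, D i j * x j = D i ⟨(i:ℕ)+1, h⟩ * x ⟨(i:ℕ)+1, h⟩ := by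
        rw [Finset.sum_eq_single (⟨(i:ℕ)+1, h⟩ : Fin n)]
        · intro b _ hb
          rw [hsupp i b (fun hc => hb (by ext; exact hc.symm)), zero_mul]
        · intro hb; exact absurd (Finset.mem_univ _) hb
      have h2 : ∑ j : Fin n, (if (i : ℕ) + 1 = (j : ℕ) then ‖x j‖ ^ 2 else 0)
          = ‖x ⟨(i:ℕ)+1, h⟩‖ ^ 2 := by
        rw [show (fun j : Fin n => if (i : ℕ) + 1 = (j : ℕ) then ‖x j‖ ^ 2 else 0)
            = fun j : Fin n => if j = ⟨(i:ℕ)+1, h⟩ then ‖x j‖ ^ 2 else 0 from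
          funext fun j => by
            by_cases hj : j = (⟨(i:ℕ)+1, h⟩ : Fin n)
            · subst hj; simp
            · rw [if_neg hj, if_neg (fun hc => hj (Fin.ext hc.symm))]]
        rw [Finset.sum_ite_eq' Finset.univ (⟨(i:ℕ)+1, h⟩ : Fin n) (fun j => ‖x j‖ ^ 2)]
        simp
      rw [h1, h2, norm_mul, mul_pow]
      gcongr
      exact hbdd _ _
    · have h1 : ∑ j, D i j * x j = 0 := by
        apply Finset.sum_eq_zero
        intro b _
        rw [hsupp i b (fun hc => h (hc ▸ b.isLt)), zero_mul]
      have h2 : ∀ j : Fin n, ¬ ((i : ℕ) + 1 = (j : ℕ)) := fun j hc => h (hc ▸ j.isLt)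
      rw [h1]
      simp only [norm_zero, ne_eq, zero_pow, OfNat.ofNat_ne_zero, not_false_iff]
      exact mul_nonneg (by positivity)
        (Finset.sum_nonneg fun j _ => by split <;> positivity)
  calc ∑ i, ‖(Matrix.toEuclideanLin D x : EuclideanSpace ℂ (Fin n)) i‖ ^ 2
      ≤ ∑ i : Fin n, δ ^ 2 * ∑ j : Fin n, (if (i : ℕ) + 1 = (j : ℕ) then ‖x j‖ ^ 2 else 0) :=
        Finset.sum_le_sum fun i _ => hrow i
    _ = δ ^ 2 * ∑ i : Fin n, ∑ j : Fin n, (if (i : ℕ) + 1 = (j : ℕ) then ‖x j‖ ^ 2 else 0) := by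
        rw [Finset.mul_sum]
    _ ≤ δ ^ 2 * ∑ j, ‖x j‖ ^ 2 := by
        apply mul_le_mul_of_nonneg_left _ (by positivity)
        rw [Finset.sum_comm]
        apply Finset.sum_le_sum
        intro j _
        by_cases hj : 0 < (j : ℕ)
        · have hjn : (j : ℕ) - 1 < n := lt_of_le_of_lt (Nat.sub_le _ _) j.isLt
          have : ∀ i : Fin n, ((i : ℕ) + 1 = (j : ℕ)) ↔ (i = ⟨(j : ℕ) - 1, hjn⟩) := by
            intro i
            constructor
            · intro hc; ext; simp; omega
            · intro hc; subst hc; simp; omega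
          calc ∑ i : Fin n, (if (i : ℕ) + 1 = (j : ℕ) then ‖x j‖ ^ 2 else 0)
              = ∑ i : Fin n, (if i = ⟨(j : ℕ) - 1, hjn⟩ then ‖x j‖ ^ 2 else 0) :=
                Finset.sum_congr rfl fun i _ => if_congr (this i) rfl rfl
            _ = ‖x j‖ ^ 2 := by
                rw [Finset.sum_ite_eq' Finset.univ _ (fun _ => ‖x j‖ ^ 2)]; simp
            _ ≤ ‖x j‖ ^ 2 := le_refl _
        · have : ∀ i : Fin n, ¬ ((i : ℕ) + 1 = (j : ℕ)) := fun i hc => by omega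
          rw [Finset.sum_eq_zero fun i _ => if_neg (this i)]
          positivity

theorem stmt_5 (n : ℕ) (α : ℂ) (A : Matrix (Fin n) (Fin n) ℂ)
    (hupper : ∀ i j : Fin n, (j : ℕ) < (i : ℕ) → A i j = 0)
    (hdiag : ∀ i : Fin n, A i i = α)
    (ε : ℝ) (hε : 0 < ε) :
    ∃ B : Matrix (Fin n) (Fin n) ℂ,
      (∀ i j : Fin n, (j : ℕ) < (i : ℕ) → B i j = 0) ∧
      (∀ i : Fin n, B i i = α) ∧
      (∀ i j : Fin n, (i : ℕ) + 1 ≠ (j : ℕ) → B i j = A i j) ∧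
      (∀ i : Fin n, ∀ h : (i : ℕ) + 1 < n, B i ⟨(i : ℕ) + 1, h⟩ ≠ 0) ∧
      ‖A - B‖ < ε := by
  classical
  set δ : ℝ := ε / 2 with hδdef
  have hδpos : 0 < δ := by positivity
  refine ⟨Matrix.of fun i j => if (i : ℕ) + 1 = (j : ℕ) ∧ A i j = 0 then (δ : ℂ) else A i j,
    ?_, ?_, ?_, ?_, ?_⟩
  · intro i j hji
    rw [Matrix.of_apply, if_neg, hupper i j hji]
    rintro ⟨hc, -⟩
    omega
  · intro i
    rw [Matrix.of_apply, if_neg (by rintro ⟨hc, -⟩; omega), hdiag]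
  · intro i j hij
    rw [Matrix.of_apply, if_neg (fun hc => hij hc.1)]
  · intro i h
    by_cases hA : A i ⟨(i:ℕ)+1, h⟩ = 0
    · rw [Matrix.of_apply, if_pos ⟨rfl, hA⟩]
      exact_mod_cast hδpos.ne'
    · rw [Matrix.of_apply, if_neg (fun hc => hA hc.2)]
      exact hA
  · have hle : ‖A - (Matrix.of fun i j => if (i : ℕ) + 1 = (j : ℕ) ∧ A i j = 0 then (δ : ℂ) else A i j :
        Matrix (Fin n) (Fin n) ℂ)‖ ≤ δ := by
      apply superdiag_opNorm_le _ δ hδpos.le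
      · intro i j hij
        simp only [Matrix.sub_apply, Matrix.of_apply]
        rw [if_neg (fun hc => hij hc.1), sub_self]
      · intro i j
        simp only [Matrix.sub_apply, Matrix.of_apply]
        by_cases hc : (i : ℕ) + 1 = (j : ℕ) ∧ A i j = 0
        · rw [if_pos hc, hc.2, zero_sub, norm_neg]
          simp [abs_of_pos hδpos]
        · rw [if_neg hc, sub_self, norm_zero]
          exact hδpos.le
    calc _ ≤ δ := hle
      _ < ε := by rw [hδdef]; linarith
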